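/- Let (S, ⪯) be a rooted tree and suppose F : S → (0, 1] satisfies F(e) = 1 and F(x) ≥ ∑_{y ∈ A(x)} F(y) for all x ∈ S. For p ∈ (0,1) define F_p : S → (0,1] by F_p(x) = p^{d(x)} F(x). Then F_p is the upper probability function of a probability density function on S. -/

import Mathlib

open scoped ENNReal NNReal

noncomputable def depth {S : Type*} [PartialOrder S] (x : S) : ℕ :=
  Nat.card {t : S // t ≤ x} - 1

namespace TreeUPF
variable {S : Type*} [PartialOrder S]

lemma depth_eq (x : S) : depth x = {t : S | t ≤ x}.ncard - 1 := by
  unfold depth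
  rw [← Nat.card_coe_set_eq]
  rfl

lemma ncard_pos' (hfin : ∀ x : S, {t : S | t ≤ x}.Finite) (x : S) :
    0 < {t : S | t ≤ x}.ncard :=
  (Set.ncard_pos (hfin x)).2 ⟨x, le_refl x⟩

lemma depth_lt (hfin : ∀ x : S, {t : S | t ≤ x}.Finite) {x y : S} (h : x < y) :
    depth x < depth y := by
  rw [depth_eq, depth_eq]
  have h1 : {t : S | t ≤ x} ⊂ {t : S | t ≤ y} := by
    constructor
    · intro t ht; exact le_trans ht h.le
    · intro hsub
      exact absurd (le_antisymm (hsub (le_refl y)) h.le) h.ne'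
  have := Set.ncard_lt_ncard h1 (hfin y)
  have := ncard_pos' hfin x
  omega

lemma depth_cover (hfin : ∀ x : S, {t : S | t ≤ x}.Finite)
    (htree : ∀ x a b : S, a ≤ x → b ≤ x → a ≤ b ∨ b ≤ a)
    {x y : S} (h : x ⋖ y) : depth y = depth x + 1 := by
  have hset : {t : S | t ≤ y} = insert y {t : S | t ≤ x} := by
    ext t
    simp only [Set.mem_setOf_eq, Set.mem_insert_iff]
    constructor
    · intro ht
      rcases eq_or_ne t y with rfl | hne
      · exact Or.inl rfl
      · right
        rcases htree y t x ht h.1.le with h1 | h1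
        · exact h1
        · rcases h1.lt_or_eq with hlt | rfl
          · exact (h.2 hlt (lt_of_le_of_ne ht hne)).elim
          · exact le_refl _
    · rintro (rfl | ht)
      · exact le_refl _
      · exact le_trans ht h.1.le
  have hy : y ∉ {t : S | t ≤ x} := fun hy => absurd (lt_of_le_of_lt hy h.1) (lt_irrefl y)
  rw [depth_eq, depth_eq, hset, Set.ncard_insert_of_notMem hy (hfin x)]
  have := ncard_pos' hfin x
  omega

lemma cover_unique (htree : ∀ x a b : S, a ≤ x → b ≤ x → a ≤ b ∨ b ≤ a)
    {t t' u : S} (h : t ⋖ u) (h' : t' ⋖ u) : t = t' := by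
  rcases htree u t t' h.1.le h'.1.le with h1 | h1
  · rcases h1.lt_or_eq with hlt | rfl
    · exact (h.2 hlt h'.1).elim
    · rfl
  · rcases h1.lt_or_eq with hlt | rfl
    · exact (h'.2 hlt h.1).elim
    · rfl

lemma exists_parent (hfin : ∀ x : S, {t : S | t ≤ x}.Finite)
    (htree : ∀ x a b : S, a ≤ x → b ≤ x → a ≤ b ∨ b ≤ a)
    {x u : S} (h : x < u) : ∃ y, x ≤ y ∧ y ⋖ u := by
  have hPfin : {t : S | t < u}.Finite := (hfin u).subset (fun t ht => le_of_lt ht)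
  obtain ⟨y, hy, hmax⟩ := Set.Finite.exists_maximalFor id {t : S | t < u} hPfin ⟨x, h⟩
  simp only [Set.mem_setOf_eq, id] at hy hmax
  refine ⟨y, ?_, hy, fun z hyz hzu => hyz.not_ge (hmax hzu hyz.le)⟩
  rcases htree u x y h.le hy.le with h1 | h1
  · exact h1
  · rcases h1.lt_or_eq with hlt | rfl
    · exact hmax h hlt.le
    · exact le_refl _

/-- general ENNReal tsum subtraction -/
lemma tsum_sub' {ι : Type*} {f g : ι → ℝ≥0∞} (hg : ∑' i, g i ≠ ⊤)
    (hle : ∀ i, g i ≤ f i) :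
    ∑' i, (f i - g i) = ∑' i, f i - ∑' i, g i := by
  have h1 : ∑' i, f i = (∑' i, (f i - g i)) + ∑' i, g i := by
    rw [← ENNReal.tsum_add]
    refine tsum_congr fun i => ?_
    rw [tsub_add_cancel_of_le (hle i)]
  rw [h1, ENNReal.add_sub_cancel_right hg]

section Analysis

variable (F : S → ℝ) (p : ℝ)

noncomputable def G (x : S) : ℝ≥0∞ := ENNReal.ofReal (p ^ depth x * F x)

noncomputable def childSum (x : S) : ℝ≥0∞ := ∑' y : {y : S // x ⋖ y}, G F p y

noncomputable def tail (x : S) (n : ℕ) : ℝ≥0∞ :=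
  ∑' t : {t : S // x ≤ t ∧ depth t = depth x + n}, G F p t

variable {F p}
variable (hfin : ∀ x : S, {t : S | t ≤ x}.Finite)
    (htree : ∀ x a b : S, a ≤ x → b ≤ x → a ≤ b ∨ b ≤ a)
    (hF0 : ∀ x : S, 0 < F x) (hF1 : ∀ x : S, F x ≤ 1)
    (hFsub : ∀ x : S, ∑' y : {y : S // x ⋖ y}, ENNReal.ofReal (F y)
      ≤ ENNReal.ofReal (F x))
    (hp0 : 0 < p) (hp1 : p < 1)

include hp0 hp1 hF0 hF1 in
lemma G_le_one (x : S) : G F p x ≤ 1 := by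
  rw [G, ENNReal.ofReal_le_one]
  exact mul_le_one₀ (pow_le_one₀ hp0.le hp1.le) (hF0 x).le (hF1 x)

include hfin htree hFsub hp0 in
lemma childSum_le (x : S) :
    childSum F p x ≤ ENNReal.ofReal p * G F p x := by
  have hG : ∀ y : {y : S // x ⋖ y},
      G F p y.1 = (ENNReal.ofReal p * ENNReal.ofReal (p ^ depth x)) * ENNReal.ofReal (F y.1) := by
    intro y
    rw [G, depth_cover hfin htree y.2, pow_succ, ENNReal.ofReal_mul (by positivity),
      ENNReal.ofReal_mul (by positivity)]
    ring
  rw [childSum]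
  calc ∑' y : {y : S // x ⋖ y}, G F p y.1
      = (ENNReal.ofReal p * ENNReal.ofReal (p ^ depth x)) * ∑' y : {y : S // x ⋖ y}, ENNReal.ofReal (F y.1) := by
        rw [← ENNReal.tsum_mul_left]; exact tsum_congr hG
    _ ≤ (ENNReal.ofReal p * ENNReal.ofReal (p ^ depth x)) * ENNReal.ofReal (F x) := by
        exact mul_le_mul_right (hFsub x) _
    _ = ENNReal.ofReal p * G F p x := by
        rw [G, ENNReal.ofReal_mul (by positivity), mul_assoc]

include hfin htree hFsub hp0 hp1 hF0 hF1 in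
lemma childSum_le' (x : S) : childSum F p x ≤ G F p x :=
  (childSum_le hfin htree hFsub hp0 x).trans
    (by calc ENNReal.ofReal p * G F p x ≤ 1 * G F p x :=
          mul_le_mul_left (ENNReal.ofReal_le_one.2 hp1.le) _
        _ = G F p x := one_mul _)

include hfin in
lemma tail_zero (x : S) : tail F p x 0 = G F p x := by
  rw [tail]
  have h : ∀ b : {t : S // x ≤ t ∧ depth t = depth x + 0},
      b ≠ ⟨x, le_refl x, rfl⟩ → G F p b.1 = 0 := by
    intro b hb
    exfalso
    apply hb
    ext
    have hnlt : ¬ x < b.1 := fun hlt => by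
      have := depth_lt hfin hlt
      have := b.2.2
      omega
    exact ((b.2.1.lt_or_eq).resolve_left hnlt).symm
  rw [tsum_eq_single _ h]

include hfin htree in
lemma tail_succ (x : S) (n : ℕ) :
    (∑' t : {t : S // x ≤ t ∧ depth t = depth x + n}, childSum F p t.1)
      = tail F p x (n + 1) := by
  let m : (Σ t : {t : S // x ≤ t ∧ depth t = depth x + n}, {y : S // t.1 ⋖ y}) →
      {u : S // x ≤ u ∧ depth u = depth x + (n + 1)} := fun q =>
    ⟨q.2.1, le_trans q.1.2.1 q.2.2.1.le, by
      rw [depth_cover hfin htree q.2.2, q.1.2.2]; omega⟩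
  have hbij : Function.Bijective m := by
    constructor
    · rintro ⟨⟨t, ht⟩, ⟨y, hy⟩⟩ ⟨⟨t', ht'⟩, ⟨y', hy'⟩⟩ h
      have hyy : y = y' := congrArg Subtype.val h
      subst hyy
      have htt : t = t' := cover_unique htree hy hy'
      subst htt
      rfl
    · rintro ⟨u, hu1, hu2⟩
      have hxu : x < u := by
        rcases hu1.lt_or_eq with h | rfl
        · exact h
        · omega
      obtain ⟨t, hxt, htu⟩ := exists_parent hfin htree hxu
      have hd : depth t = depth x + n := by
        have := depth_cover hfin htree htu
        omega
      exact ⟨⟨⟨t, hxt, hd⟩, ⟨u, htu⟩⟩, rfl⟩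
  have e := Equiv.ofBijective m hbij
  calc (∑' t : {t : S // x ≤ t ∧ depth t = depth x + n}, childSum F p t.1)
      = ∑' q : (Σ t : {t : S // x ≤ t ∧ depth t = depth x + n}, {y : S // t.1 ⋖ y}),
          G F p q.2.1 := by
        rw [ENNReal.tsum_sigma']
        rfl
    _ = ∑' u : {u : S // x ≤ u ∧ depth u = depth x + (n + 1)}, G F p u.1 := by
        have := (Equiv.ofBijective m hbij).tsum_eq
          (fun u : {u : S // x ≤ u ∧ depth u = depth x + (n + 1)} => G F p u.1)
        exact this
    _ = tail F p x (n + 1) := rfl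

include hfin htree hFsub hp0 in
lemma tail_succ_le (x : S) (n : ℕ) :
    tail F p x (n + 1) ≤ ENNReal.ofReal p * tail F p x n := by
  rw [← tail_succ hfin htree, tail, ← ENNReal.tsum_mul_left]
  exact ENNReal.tsum_le_tsum fun t => childSum_le hfin htree hFsub hp0 t.1

include hfin htree hFsub hp0 hp1 hF0 hF1 in
lemma tail_le_pow (x : S) (n : ℕ) :
    tail F p x n ≤ (ENNReal.ofReal p) ^ n := by
  induction n with
  | zero => simpa [tail_zero hfin] using G_le_one hF0 hF1 hp0 hp1 x
  | succ n ih =>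
    calc tail F p x (n + 1) ≤ ENNReal.ofReal p * tail F p x n :=
          tail_succ_le hfin htree hFsub hp0 x n
      _ ≤ ENNReal.ofReal p * (ENNReal.ofReal p) ^ n := mul_le_mul_right ih _
      _ = (ENNReal.ofReal p) ^ (n + 1) := (pow_succ' _ _).symm

include hfin htree hFsub hp0 hp1 hF0 hF1 in
lemma tail_antitone (x : S) (n : ℕ) : tail F p x (n + 1) ≤ tail F p x n :=
  (tail_succ_le hfin htree hFsub hp0 x n).trans
    (by calc ENNReal.ofReal p * tail F p x n ≤ 1 * tail F p x n :=
          mul_le_mul_left (ENNReal.ofReal_le_one.2 hp1.le) _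
        _ = _ := one_mul _)

include hfin htree hFsub hp0 hp1 hF0 hF1 in
lemma main_sum (x : S) :
    ∑' t : {t : S // x ≤ t}, (G F p t.1 - childSum F p t.1) = G F p x := by
  -- partition by depth
  let m : (Σ n : ℕ, {t : S // x ≤ t ∧ depth t = depth x + n}) → {t : S // x ≤ t} :=
    fun q => ⟨q.2.1, q.2.2.1⟩
  have hbij : Function.Bijective m := by
    constructor
    · rintro ⟨n, ⟨t, ht1, ht2⟩⟩ ⟨n', ⟨t', ht1', ht2'⟩⟩ h
      have htt : t = t' := congrArg Subtype.val h
      subst htt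
      have : n = n' := by omega
      subst this
      rfl
    · rintro ⟨t, ht⟩
      have hd : depth x ≤ depth t := by
        rcases ht.lt_or_eq with h | rfl
        · exact (depth_lt hfin h).le
        · exact le_refl _
      exact ⟨⟨depth t - depth x, ⟨t, ht, by omega⟩⟩, rfl⟩
  have step1 : ∑' t : {t : S // x ≤ t}, (G F p t.1 - childSum F p t.1)
      = ∑' n : ℕ, (tail F p x n - tail F p x (n + 1)) := by
    rw [← (Equiv.ofBijective m hbij).tsum_eq
      (fun t : {t : S // x ≤ t} => G F p t.1 - childSum F p t.1)]
    rw [ENNReal.tsum_sigma']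
    refine tsum_congr fun n => ?_
    have hsub : ∑' t : {t : S // x ≤ t ∧ depth t = depth x + n}, childSum F p t.1 ≠ ⊤ := by
      rw [tail_succ hfin htree]
      exact ((tail_le_pow hfin htree hF0 hF1 hFsub hp0 hp1 x (n+1)).trans_lt
        (lt_of_le_of_lt (pow_le_one₀ zero_le (ENNReal.ofReal_le_one.2 hp1.le))
          ENNReal.one_lt_top)).ne
    calc ∑' t : {t : S // x ≤ t ∧ depth t = depth x + n},
          (G F p t.1 - childSum F p t.1)
        = (∑' t : {t : S // x ≤ t ∧ depth t = depth x + n}, G F p t.1)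
            - ∑' t : {t : S // x ≤ t ∧ depth t = depth x + n}, childSum F p t.1 :=
          tsum_sub' hsub (fun t => childSum_le' hfin htree hF0 hF1 hFsub hp0 hp1 t.1)
      _ = tail F p x n - tail F p x (n + 1) := by
          rw [tail_succ hfin htree]; rfl
  rw [step1]
  -- telescoping
  have hpart : ∀ N : ℕ, ∑ n ∈ Finset.range N, (tail F p x n - tail F p x (n + 1))
      = tail F p x 0 - tail F p x N := by
    intro N
    induction N with
    | zero => simp
    | succ N ih =>
      rw [Finset.sum_range_succ, ih]
      have h1 : tail F p x N ≤ tail F p x 0 := by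
        clear ih
        induction N with
        | zero => exact le_refl _
        | succ N ih2 => exact (tail_antitone hfin htree hF0 hF1 hFsub hp0 hp1 x N).trans ih2
      exact tsub_add_tsub_cancel h1 (tail_antitone hfin htree hF0 hF1 hFsub hp0 hp1 x N)
  rw [ENNReal.tsum_eq_iSup_nat]
  simp only [hpart]
  rw [← ENNReal.sub_iInf]
  have hinf : ⨅ n, tail F p x n = 0 := by
    refine le_antisymm ?_ zero_le
    have h1 : (⨅ n, tail F p x n) ≤ ⨅ n : ℕ, (ENNReal.ofReal p) ^ n :=
      le_iInf fun n => (iInf_le _ n).trans (tail_le_pow hfin htree hF0 hF1 hFsub hp0 hp1 x n)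
    have h2 : (⨅ n : ℕ, (ENNReal.ofReal p) ^ n) = 0 := by
      have hanti : Antitone (fun n : ℕ => (ENNReal.ofReal p) ^ n) := fun n m hnm =>
        pow_le_pow_of_le_one zero_le (ENNReal.ofReal_le_one.2 hp1.le) hnm
      have := tendsto_atTop_iInf hanti
      have h0 := ENNReal.tendsto_pow_atTop_nhds_zero_of_lt_one (ENNReal.ofReal_lt_one.2 hp1)
      exact tendsto_nhds_unique this h0
    exact h1.trans h2.le
  rw [hinf, tsub_zero, tail_zero hfin]

end Analysis
end TreeUPF


theorem tree_upf_of_subUPF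
    {S : Type*} [Countable S] [PartialOrder S] [OrderBot S]
    (hfin : ∀ x : S, {t : S | t ≤ x}.Finite)
    (htree : ∀ x a b : S, a ≤ x → b ≤ x → a ≤ b ∨ b ≤ a)
    (F : S → ℝ) (hF0 : ∀ x : S, 0 < F x) (hF1 : ∀ x : S, F x ≤ 1)
    (hFe : F ⊥ = 1)
    (hFsub : ∀ x : S, ∑' y : {y : S // x ⋖ y}, ENNReal.ofReal (F y)
      ≤ ENNReal.ofReal (F x))
    (p : ℝ) (hp0 : 0 < p) (hp1 : p < 1) :
    ∃ f : S → ℝ≥0, (∑' x : S, (f x : ℝ≥0∞) = 1) ∧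
      ∀ x : S, ENNReal.ofReal (p ^ depth x * F x)
        = ∑' t : {t : S // x ≤ t}, (f t : ℝ≥0∞) := by
  classical
  refine ⟨fun x => (TreeUPF.G F p x - TreeUPF.childSum F p x).toNNReal, ?_, ?_⟩
  · -- total mass 1
    have hcoe : ∀ x : S,
        (((TreeUPF.G F p x - TreeUPF.childSum F p x).toNNReal : ℝ≥0) : ℝ≥0∞)
          = TreeUPF.G F p x - TreeUPF.childSum F p x := by
      intro x
      refine ENNReal.coe_toNNReal ?_
      exact ((tsub_le_self.trans (TreeUPF.G_le_one hF0 hF1 hp0 hp1 x)).trans_lt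
        ENNReal.one_lt_top).ne
    have he := (Equiv.subtypeUnivEquiv (fun t : S => (bot_le : ⊥ ≤ t))).tsum_eq
      (fun x : S => (((TreeUPF.G F p x - TreeUPF.childSum F p x).toNNReal : ℝ≥0) : ℝ≥0∞))
    rw [← he]
    have := TreeUPF.main_sum hfin htree hF0 hF1 hFsub hp0 hp1 (⊥ : S)
    calc ∑' t : {t : S // ⊥ ≤ t},
          (((TreeUPF.G F p t.1 - TreeUPF.childSum F p t.1).toNNReal : ℝ≥0) : ℝ≥0∞)
        = ∑' t : {t : S // ⊥ ≤ t}, (TreeUPF.G F p t.1 - TreeUPF.childSum F p t.1) :=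
          tsum_congr fun t => hcoe t.1
      _ = TreeUPF.G F p (⊥ : S) := this
      _ = 1 := by
          have hd : depth (⊥ : S) = 0 := by
            rw [TreeUPF.depth_eq]
            have : {t : S | t ≤ ⊥} = {⊥} := by
              ext t; simp [le_bot_iff]
            rw [this, Set.ncard_singleton]
          rw [TreeUPF.G, hd, hFe]
          simp
  · intro x
    have hcoe : ∀ t : S,
        (((TreeUPF.G F p t - TreeUPF.childSum F p t).toNNReal : ℝ≥0) : ℝ≥0∞)
          = TreeUPF.G F p t - TreeUPF.childSum F p t := by
      intro t
      refine ENNReal.coe_toNNReal ?_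
      exact ((tsub_le_self.trans (TreeUPF.G_le_one hF0 hF1 hp0 hp1 t)).trans_lt
        ENNReal.one_lt_top).ne
    calc ENNReal.ofReal (p ^ depth x * F x)
        = TreeUPF.G F p x := rfl
      _ = ∑' t : {t : S // x ≤ t}, (TreeUPF.G F p t.1 - TreeUPF.childSum F p t.1) :=
          (TreeUPF.main_sum hfin htree hF0 hF1 hFsub hp0 hp1 x).symm
      _ = _ := (tsum_congr fun t => (hcoe t.1).symm)
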